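/- If Φ(z) = Σ_{j≥1} a_j z^j is holomorphic on a disk Δ_δ with a_1 ≠ 0 and satisfies Φ(z^n) = (Φ(z))^n for all z ∈ Δ_δ, where n ≥ 2, then a_1^{n-1} = 1 and a_j = 0 for all j ≥ 2, i.e., Φ(z) = a_1 z with a_1 an (n−1)-th root of unity. -/

import Mathlib

open Metric Complex Filter Topology

theorem commuting_with_power_is_linear
    (Φ : ℂ → ℂ) (δ : ℝ) (hδ : 0 < δ) (n : ℕ) (hn : 2 ≤ n)
    (hΦ : DifferentiableOn ℂ Φ (ball (0:ℂ) δ))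
    (hΦ0 : Φ 0 = 0)
    (ha₁ : deriv Φ 0 ≠ 0)
    (hcomm : ∀ z ∈ ball (0:ℂ) δ, Φ (z ^ n) = (Φ z) ^ n) :
    (deriv Φ 0) ^ (n - 1) = 1 ∧ ∀ z ∈ ball (0:ℂ) δ, Φ z = deriv Φ 0 * z := by
  have hn1 : (1:ℕ) < n := lt_of_lt_of_le one_lt_two hn
  set a := deriv Φ 0 with ha
  set r := min δ 1 with hr
  have hr0 : 0 < r := lt_min hδ one_pos
  have hrδ : r ≤ δ := min_le_left _ _
  have hr1 : r ≤ 1 := min_le_right _ _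
  set g := dslope Φ 0 with hg
  have hball : ball (0:ℂ) δ ∈ 𝓝 (0:ℂ) := ball_mem_nhds _ hδ
  have hgd : DifferentiableOn ℂ g (ball (0:ℂ) δ) := (differentiableOn_dslope hball).2 hΦ
  have hg0 : g 0 = a := dslope_same Φ 0
  have hΦg : ∀ z : ℂ, Φ z = z * g z := by
    intro z
    have h := sub_smul_dslope Φ 0 z
    rw [hΦ0, sub_zero, sub_zero, smul_eq_mul] at h
    exact h.symm
  -- membership of powers in the small ball
  have hmem : ∀ z : ℂ, z ∈ ball (0:ℂ) r → ∀ m : ℕ, m ≠ 0 → z ^ m ∈ ball (0:ℂ) r := by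
    intro z hz m hm
    rw [mem_ball_zero_iff] at hz ⊢
    rw [norm_pow]
    calc ‖z‖ ^ m ≤ ‖z‖ := pow_le_of_le_one (norm_nonneg _) (le_trans hz.le hr1) hm
    _ < r := hz
  -- the functional equation for g
  have hgcomm : ∀ z : ℂ, z ∈ ball (0:ℂ) δ → z ≠ 0 → g (z ^ n) = g z ^ n := by
    intro z hz hz0
    have h := hcomm z hz
    rw [hΦg (z ^ n), hΦg z, mul_pow] at h
    exact mul_left_cancel₀ (pow_ne_zero n hz0) h
  -- iterated functional equation
  have hiter : ∀ z : ℂ, z ∈ ball (0:ℂ) r → z ≠ 0 → ∀ k : ℕ,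
      g (z ^ n ^ k) = g z ^ n ^ k := by
    intro z hz hz0 k
    induction k with
    | zero => simp
    | succ k ih =>
      have hmemk : z ^ n ^ k ∈ ball (0:ℂ) r := hmem z hz _ (pow_ne_zero k (by omega))
      have hne : z ^ n ^ k ≠ 0 := pow_ne_zero _ hz0
      have := hgcomm (z ^ n ^ k) (lt_of_lt_of_le (mem_ball.1 hmemk) hrδ) hne
      rw [← pow_mul, ← pow_succ] at this
      rw [this, ih, ← pow_mul, ← pow_succ]
  -- continuity of g at 0
  have hgc : ContinuousAt g 0 :=
    (hgd.differentiableAt hball).continuousAt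
  -- key limit: for z in the small punctured ball, g z ^ n ^ k → a
  have hlim : ∀ z : ℂ, z ∈ ball (0:ℂ) r → z ≠ 0 →
      Tendsto (fun k : ℕ => g z ^ n ^ k) atTop (𝓝 a) := by
    intro z hz hz0
    have hz1 : ‖z‖ < 1 := lt_of_lt_of_le (mem_ball_zero_iff.1 hz) hr1
    have hzt : Tendsto (fun k : ℕ => z ^ n ^ k) atTop (𝓝 0) := by
      rw [tendsto_zero_iff_norm_tendsto_zero]
      have h1 : Tendsto (fun m : ℕ => ‖z‖ ^ m) atTop (𝓝 0) :=
        tendsto_pow_atTop_nhds_zero_of_lt_one (norm_nonneg _) hz1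
      have h2 : Tendsto (fun k : ℕ => n ^ k) atTop atTop :=
        tendsto_pow_atTop_atTop_of_one_lt hn1
      simpa [norm_pow, Function.comp_def] using h1.comp h2
    have := hgc.tendsto.comp hzt
    rw [hg0] at this
    have heq : (fun k : ℕ => g z ^ n ^ k) = (g ∘ fun k : ℕ => z ^ n ^ k) := by
      funext k
      simp [Function.comp, hiter z hz hz0 k]
    rw [heq]
    exact this
  -- norm of g is 1 on the punctured small ball
  have hnorm1 : ∀ z : ℂ, z ∈ ball (0:ℂ) r → z ≠ 0 → ‖g z‖ = 1 := by
    intro z hz hz0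
    rcases lt_trichotomy ‖g z‖ 1 with h | h | h
    · exfalso
      have h1 : Tendsto (fun k : ℕ => g z ^ n ^ k) atTop (𝓝 0) := by
        rw [tendsto_zero_iff_norm_tendsto_zero]
        have h1 : Tendsto (fun m : ℕ => ‖g z‖ ^ m) atTop (𝓝 0) :=
          tendsto_pow_atTop_nhds_zero_of_lt_one (norm_nonneg _) h
        have h2 : Tendsto (fun k : ℕ => n ^ k) atTop atTop :=
          tendsto_pow_atTop_atTop_of_one_lt hn1
        simpa [norm_pow, Function.comp_def] using h1.comp h2
      exact ha₁ (tendsto_nhds_unique (hlim z hz hz0) h1)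
    · exact h
    · exfalso
      have h1 : Tendsto (fun k : ℕ => ‖g z ^ n ^ k‖) atTop atTop := by
        have h1 : Tendsto (fun m : ℕ => ‖g z‖ ^ m) atTop atTop :=
          tendsto_pow_atTop_atTop_of_one_lt h
        have h2 : Tendsto (fun k : ℕ => n ^ k) atTop atTop :=
          tendsto_pow_atTop_atTop_of_one_lt hn1
        simpa [norm_pow, Function.comp_def] using h1.comp h2
      exact not_tendsto_atTop_of_tendsto_nhds ((hlim z hz hz0).norm) h1
  -- hence ‖a‖ = 1
  set z₀ : ℂ := (r:ℝ) / 2 with hz₀def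
  have hz₀norm : ‖z₀‖ = r / 2 := by
    rw [hz₀def, norm_div, Complex.norm_real, Real.norm_eq_abs, abs_of_pos hr0]
    simp
  have hz₀mem : z₀ ∈ ball (0:ℂ) r := by
    rw [mem_ball_zero_iff, hz₀norm]; linarith
  have hz₀ne : z₀ ≠ 0 := by
    intro h
    rw [h, norm_zero] at hz₀norm
    linarith
  have hanorm : ‖a‖ = 1 := by
    have hw := hnorm1 _ hz₀mem hz₀ne
    have h1 : Tendsto (fun k : ℕ => ‖g z₀ ^ n ^ k‖) atTop (𝓝 ‖a‖) :=
      (hlim _ hz₀mem hz₀ne).norm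
    have h2 : (fun k : ℕ => ‖g z₀ ^ n ^ k‖) = fun _ => 1 := by
      funext k; rw [norm_pow, hw, one_pow]
    rw [h2] at h1
    exact (tendsto_nhds_unique tendsto_const_nhds h1).symm
  -- maximum modulus: g is constant on the small ball
  have hmax : IsMaxOn (norm ∘ g) (ball (0:ℂ) r) 0 := by
    intro z hz
    simp only [Function.comp, hg0, hanorm, Set.mem_setOf_eq]
    rcases eq_or_ne z 0 with rfl | hz0
    · simp [hg0, hanorm]
    · simp [hnorm1 z hz hz0]
  have hgconst : Set.EqOn g (Function.const ℂ (g 0)) (ball (0:ℂ) r) :=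
    Complex.eqOn_of_isPreconnected_of_isMaxOn_norm (convex_ball _ _).isPreconnected
      isOpen_ball (hgd.mono (ball_subset_ball hrδ)) (mem_ball_self hr0) hmax
  have hΦsmall : ∀ z ∈ ball (0:ℂ) r, Φ z = a * z := by
    intro z hz
    rw [hΦg z, hgconst hz, Function.const_apply, hg0, mul_comm]
  -- a ^ n = a
  have han : a ^ n = a := by
    have h1 := hcomm _ (lt_of_lt_of_le (mem_ball.1 hz₀mem) hrδ)
    rw [hΦsmall _ hz₀mem, hΦsmall _ (hmem _ hz₀mem n (by omega)), mul_pow] at h1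
    have := mul_right_cancel₀ (pow_ne_zero n hz₀ne) h1
    linear_combination -this
  have hpow : a ^ (n - 1) = 1 := by
    have h1 : a * a ^ (n - 1) = a * 1 := by
      rw [mul_one, ← pow_succ']
      rw [show n - 1 + 1 = n by omega]
      exact han
    exact mul_left_cancel₀ ha₁ h1
  refine ⟨hpow, ?_⟩
  -- identity principle to extend to the whole ball
  have hA1 : AnalyticOnNhd ℂ Φ (ball (0:ℂ) δ) := hΦ.analyticOnNhd isOpen_ball
  have hA2 : AnalyticOnNhd ℂ (fun z : ℂ => a * z) (ball (0:ℂ) δ) :=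
    ((differentiable_id.const_mul a).differentiableOn).analyticOnNhd isOpen_ball
  have heq : Set.EqOn Φ (fun z : ℂ => a * z) (ball (0:ℂ) δ) := by
    apply hA1.eqOn_of_preconnected_of_eventuallyEq hA2 (convex_ball _ _).isPreconnected
      (mem_ball_self hδ)
    exact Filter.eventuallyEq_of_mem (ball_mem_nhds _ hr0) hΦsmall
  exact fun z hz => heq hz
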